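/- Let A ∈ (𝕊max^∨)^{n×n} be TPSD with diagonal entries d₁ ⪰ d₂ ⪰ ⋯ ⪰ dₙ. Then for every k ∈ [n], either tr_k(A) = d₁ ⊙ ⋯ ⊙ d_k or tr_k(A) = (d₁ ⊙ ⋯ ⊙ d_k)°; in particular 𝟘 ≤ tr_k(A). If moreover A is TPD, then tr_k(A) = d₁ ⊙ ⋯ ⊙ d_k and 𝟘 < tr_k(A) for every k ∈ [n]. -/

import Mathlib

/-!
Common framework: the symmetrized tropical semiring 𝕊max over a linearly
ordered abelian group Γ, represented concretely: an element is either 𝟘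
(represented by `none`) or a pair of a modulus `c : Γ` and a sign
(positive, negative or balanced), matching the classes of the quotient
𝕋max²/ℛ described in the paper.
-/

namespace TropPaper

inductive SSign : Type
  | pos
  | neg
  | bal
  deriving DecidableEq

/-- The symmetrized tropical semiring 𝕊max(Γ): `none` is 𝟘, and
`some (c, s)` is the class of modulus `c` and sign `s`. -/
def Smax (Γ : Type) : Type := Option (Γ × SSign)

/-- Γ is divisible. -/
def DivisibleGrp (Γ : Type) [AddCommGroup Γ] : Prop :=
  ∀ k : ℕ, 0 < k → ∀ a : Γ, ∃ b : Γ, k • b = a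

section Defs

variable {Γ : Type} [AddCommGroup Γ] [LinearOrder Γ] [IsOrderedAddMonoid Γ]

/-- 𝟘 -/
def szero : Smax Γ := none

/-- 𝟙 -/
def sone : Smax Γ := some ((0 : Γ), SSign.pos)

/-- modulus |·| : 𝕊max → 𝕋max = WithBot Γ -/
def smod : Smax Γ → WithBot Γ
  | none => ⊥
  | some (c, _) => (c : WithBot Γ)

def sgnMul : SSign → SSign → SSign
  | SSign.pos, t => t
  | SSign.neg, SSign.pos => SSign.neg
  | SSign.neg, SSign.neg => SSign.pos
  | SSign.neg, SSign.bal => SSign.bal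
  | SSign.bal, _ => SSign.bal

/-- ⊕ on 𝕊max -/
def sadd : Smax Γ → Smax Γ → Smax Γ
  | none, b => b
  | some a, none => some a
  | some (c, s), some (d, t) =>
      if c < d then some (d, t)
      else if d < c then some (c, s)
      else some (c, if s = t then s else SSign.bal)

/-- ⊖ (unary) on 𝕊max -/
def sneg : Smax Γ → Smax Γ
  | none => none
  | some (c, SSign.pos) => some (c, SSign.neg)
  | some (c, SSign.neg) => some (c, SSign.pos)
  | some (c, SSign.bal) => some (c, SSign.bal)

/-- ⊙ on 𝕊max -/
def smul : Smax Γ → Smax Γ → Smax Γ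
  | none, _ => none
  | some _, none => none
  | some (c, s), some (d, t) => some (c + d, sgnMul s t)

/-- a ⊖ b -/
def ssub (a b : Smax Γ) : Smax Γ := sadd a (sneg b)

/-- a° = a ⊖ a -/
def sbal (a : Smax Γ) : Smax Γ := ssub a a

/-- the positive element with the same modulus (|·| seen inside 𝕊max⊕) -/
def sabs : Smax Γ → Smax Γ
  | none => none
  | some (c, _) => some (c, SSign.pos)

/-- multiplicative inverse (of invertible, i.e. signed nonzero, elements) -/
def sinv : Smax Γ → Smax Γ
  | none => none
  | some (c, s) => some (-c, s)

/-- a^{⊙k} -/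
def spow (a : Smax Γ) : ℕ → Smax Γ
  | 0 => sone
  | k + 1 => smul a (spow a k)

/-- membership in 𝕊max° (balanced elements together with 𝟘) -/
def IsBal : Smax Γ → Prop
  | none => True
  | some (_, s) => s = SSign.bal

/-- membership in 𝕊max⊕ (positive elements together with 𝟘) -/
def IsPos : Smax Γ → Prop
  | none => True
  | some (_, s) => s = SSign.pos

/-- membership in 𝕊max^∨ (signed elements) -/
def IsSigned : Smax Γ → Prop
  | none => True
  | some (_, s) => s ≠ SSign.bal

/-- the balance relation a ∇ b -/
def Balance (a b : Smax Γ) : Prop := IsBal (ssub a b)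

/-- a ⪯ b -/
def natLe (a b : Smax Γ) : Prop := sadd a b = b

/-- a ≤ b :⟺ b ⊖ a ∈ 𝕊max⊕ ∪ 𝕊max° -/
def sle (a b : Smax Γ) : Prop := IsPos (ssub b a) ∨ IsBal (ssub b a)

/-- a < b :⟺ b ⊖ a ∈ 𝕊max⊕ ∖ {𝟘} -/
def slt (a b : Smax Γ) : Prop := IsPos (ssub b a) ∧ ssub b a ≠ szero

/-- finite ⊕-sum over a list -/
def sumS {α : Type} (l : List α) (f : α → Smax Γ) : Smax Γ :=
  (l.map f).foldr sadd szero

/-- finite ⊙-product over a list -/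
def prodS {α : Type} (l : List α) (f : α → Smax Γ) : Smax Γ :=
  (l.map f).foldr smul sone

/-- the zero vector -/
def zeroVecS {n : ℕ} : Fin n → Smax Γ := fun _ => szero

def VecSigned {n : ℕ} (x : Fin n → Smax Γ) : Prop := ∀ i, IsSigned (x i)

def MatSigned {n : ℕ} (A : Matrix (Fin n) (Fin n) (Smax Γ)) : Prop :=
  ∀ i j, IsSigned (A i j)

def SymmS {n : ℕ} (A : Matrix (Fin n) (Fin n) (Smax Γ)) : Prop :=
  ∀ i j, A i j = A j i

/-- A ⊙ v -/
def matVecS {n : ℕ} (A : Matrix (Fin n) (Fin n) (Smax Γ)) (v : Fin n → Smax Γ) :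
    Fin n → Smax Γ :=
  fun i => sumS (List.finRange n) fun j => smul (A i j) (v j)

/-- A ⊙ B -/
def matMulS {n : ℕ} (A B : Matrix (Fin n) (Fin n) (Smax Γ)) :
    Matrix (Fin n) (Fin n) (Smax Γ) :=
  Matrix.of fun i j => sumS (List.finRange n) fun l => smul (A i l) (B l j)

/-- the identity matrix I -/
def idMatS {n : ℕ} : Matrix (Fin n) (Fin n) (Smax Γ) :=
  Matrix.of fun i j => if i = j then sone else szero

/-- xᵀ ⊙ A ⊙ x -/
def quadFormS {n : ℕ} (A : Matrix (Fin n) (Fin n) (Smax Γ)) (x : Fin n → Smax Γ) :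
    Smax Γ :=
  sumS (List.finRange n) fun i => sumS (List.finRange n) fun j =>
    smul (x i) (smul (A i j) (x j))

/-- tropical positive definiteness (the quadratic-form condition) -/
def TPD {n : ℕ} (A : Matrix (Fin n) (Fin n) (Smax Γ)) : Prop :=
  ∀ x : Fin n → Smax Γ, VecSigned x → x ≠ zeroVecS → slt szero (quadFormS A x)

/-- tropical positive semidefiniteness -/
def TPSD {n : ℕ} (A : Matrix (Fin n) (Fin n) (Smax Γ)) : Prop :=
  ∀ x : Fin n → Smax Γ, VecSigned x → x ≠ zeroVecS → sle szero (quadFormS A x)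

/-- sgn(π) ∈ {𝟙, ⊖𝟙} -/
def permSignS {n : ℕ} (π : Equiv.Perm (Fin n)) : Smax Γ :=
  if (Equiv.Perm.sign π : ℤ) = 1 then sone else sneg sone

/-- the determinant over 𝕊max -/
noncomputable def detS {n : ℕ} (M : Matrix (Fin n) (Fin n) (Smax Γ)) : Smax Γ :=
  sumS (Finset.univ : Finset (Equiv.Perm (Fin n))).toList fun π =>
    smul (permSignS π) (prodS (List.finRange n) fun i => M i (π i))

/-- the adjugate matrix over 𝕊max -/
noncomputable def adjS {n : ℕ} (M : Matrix (Fin (n+1)) (Fin (n+1)) (Smax Γ)) :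
    Matrix (Fin (n+1)) (Fin (n+1)) (Smax Γ) :=
  Matrix.of fun i j =>
    smul (spow (sneg sone) (i.val + j.val))
      (detS (Matrix.of fun a b : Fin n => M (Fin.succAbove j a) (Fin.succAbove i b)))

/-- γ ⊙ I ⊖ A -/
def charMatS {n : ℕ} (γ : Smax Γ) (A : Matrix (Fin n) (Fin n) (Smax Γ)) :
    Matrix (Fin n) (Fin n) (Smax Γ) :=
  Matrix.of fun i j => ssub (smul γ (idMatS i j)) (A i j)

/-- tr_k(A) = ⊕_{|K| = k} det(A[K,K]) -/
noncomputable def trkS {n : ℕ} (k : ℕ) (A : Matrix (Fin n) (Fin n) (Smax Γ)) : Smax Γ :=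
  sumS ((Finset.univ : Finset (Fin n)).powersetCard k).attach.toList fun K =>
    detS (Matrix.of fun a b : Fin k =>
      A (K.1.orderEmbOfFin (Finset.mem_powersetCard.mp K.2).2 a)
        (K.1.orderEmbOfFin (Finset.mem_powersetCard.mp K.2).2 b))

/-- matrix power A^{⊙k} -/
def matPowS {n : ℕ} (A : Matrix (Fin n) (Fin n) (Smax Γ)) :
    ℕ → Matrix (Fin n) (Fin n) (Smax Γ)
  | 0 => idMatS
  | k + 1 => matMulS A (matPowS A k)

/-- partial Kleene sums I ⊕ A ⊕ ⋯ ⊕ A^{⊙m} -/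
def starPartialS {n : ℕ} (A : Matrix (Fin n) (Fin n) (Smax Γ)) (m : ℕ) :
    Matrix (Fin n) (Fin n) (Smax Γ) :=
  Matrix.of fun i j => sumS (List.range (m+1)) fun k => matPowS A k i j

/-- the diagonal matrix D^(k) with diagonal (γ₁,…,γ_{k−1},𝟘,…,𝟘) (0-based k) -/
def DmatS {n : ℕ} (A : Matrix (Fin n) (Fin n) (Smax Γ)) (k : Fin n) :
    Matrix (Fin n) (Fin n) (Smax Γ) :=
  Matrix.of fun i j => if i = j ∧ i < k then A i i else szero

/-- the complementary matrix A^(k) -/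
def AmatS {n : ℕ} (A : Matrix (Fin n) (Fin n) (Smax Γ)) (k : Fin n) :
    Matrix (Fin n) (Fin n) (Smax Γ) :=
  Matrix.of fun i j => if i ≠ j ∨ k ≤ i then A i j else szero

/-- M = (γ⊙I ⊖ D^(k))^{⊙−1} ⊙ A^(k) -/
def MmatS {n : ℕ} (A : Matrix (Fin n) (Fin n) (Smax Γ)) (k : Fin n) :
    Matrix (Fin n) (Fin n) (Smax Γ) :=
  Matrix.of fun i j =>
    smul (sinv (if i < k then sneg (A i i) else A k k)) (AmatS A k i j)

/-- λ_k = (⊖𝟙)^{⊙(k−1)} ⊙ γ₁ ⊙ ⋯ ⊙ γ_{k−1} ⊙ γ^{⊙(n−k)} (0-based k, size n) -/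
def lamkS {n : ℕ} (A : Matrix (Fin n) (Fin n) (Smax Γ)) (k : Fin n) : Smax Γ :=
  smul (spow (sneg sone) k.val)
    (smul (prodS ((List.finRange n).filter (fun i => i < k)) fun i => A i i)
      (spow (A k k) (n - 1 - k.val)))

/-- irreducibility: the digraph of nonzero entries is strongly connected -/
def IrreducibleS {n : ℕ} (A : Matrix (Fin n) (Fin n) (Smax Γ)) : Prop :=
  ∀ i j : Fin n, Relation.ReflTransGen (fun a b => A a b ≠ szero) i j

/-- diagonal entries sorted non-increasingly for ⪯ -/
def DiagSortedS {n : ℕ} (A : Matrix (Fin n) (Fin n) (Smax Γ)) : Prop :=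
  ∀ i j : Fin n, i ≤ j → natLe (A j j) (A i i)

/-! 𝕋max-side notions (for the characteristic polynomial of |A|). -/

/-- finite max over a list in 𝕋max -/
def sumT {α : Type} (l : List α) (f : α → WithBot Γ) : WithBot Γ :=
  (l.map f).foldr max ⊥

/-- finite ⊙-product over a list in 𝕋max -/
def prodT {α : Type} (l : List α) (f : α → WithBot Γ) : WithBot Γ :=
  (l.map f).foldr (· + ·) (0 : WithBot Γ)

/-- the permanent over 𝕋max -/
noncomputable def perT {n : ℕ} (M : Matrix (Fin n) (Fin n) (WithBot Γ)) : WithBot Γ :=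
  sumT (Finset.univ : Finset (Equiv.Perm (Fin n))).toList fun π =>
    prodT (List.finRange n) fun i => M i (π i)

/-- coefficient of X^k in the 𝕋max-characteristic polynomial of B -/
noncomputable def charCoeffT {n : ℕ} (B : Matrix (Fin n) (Fin n) (WithBot Γ)) (k : ℕ) : WithBot Γ :=
  if k ≤ n then
    sumT ((Finset.univ : Finset (Fin n)).powersetCard (n - k)).attach.toList fun K =>
      perT (Matrix.of fun a b : Fin (n - k) =>
        B (K.1.orderEmbOfFin (Finset.mem_powersetCard.mp K.2).2 a)
          (K.1.orderEmbOfFin (Finset.mem_powersetCard.mp K.2).2 b))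
  else ⊥

/-- multiplicity of x as a 𝕋max-root of the formal polynomial of degree ≤ n
with coefficients Q: for x = ⊥ it is the lower degree, for x = c ∈ Γ it is the
difference between the largest and smallest exponents attaining
max_k (Q_k + k·c). -/
noncomputable def rootMultT (n : ℕ) (Q : ℕ → WithBot Γ) (x : WithBot Γ) : ℕ :=
  WithBot.recBotCoe
    (sInf {k | Q k ≠ ⊥})
    (fun c =>
      sSup {k | k ≤ n ∧ Q k + ((k • c : Γ) : WithBot Γ)
              = sumT (List.range (n+1)) (fun l => Q l + ((l • c : Γ) : WithBot Γ))}
        - sInf {k | k ≤ n ∧ Q k + ((k • c : Γ) : WithBot Γ)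
              = sumT (List.range (n+1)) (fun l => Q l + ((l • c : Γ) : WithBot Γ))})
    x

end Defs

/-- the signed valuation associated with a valuation v on an ordered field L -/
def svMap {Γ : Type} [AddCommGroup Γ] [LinearOrder Γ] [IsOrderedAddMonoid Γ] {L : Type} [Field L] [LinearOrder L] [IsStrictOrderedRing L]
    (v : L → WithBot Γ) (b : L) : Smax Γ :=
  if b = 0 then szero
  else if 0 < b then WithBot.recBotCoe szero (fun c => some (c, SSign.pos)) (v b)
  else WithBot.recBotCoe szero (fun c => some (c, SSign.neg)) (v b)

end TropPaper

namespace TropPaper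

set_option linter.unusedSectionVars false

section Basics

variable {Γ : Type} [AddCommGroup Γ] [LinearOrder Γ] [IsOrderedAddMonoid Γ]

@[simp] lemma smax_some_eq_some (x y : Γ × SSign) : ((some x : Smax Γ) = some y) ↔ x = y :=
  Option.some_inj

@[simp] lemma smax_none_eq_none : ((none : Smax Γ) = none) ↔ True := iff_of_true rfl trivial

lemma smod_szero : smod (szero : Smax Γ) = ⊥ := rfl

lemma smod_some (c : Γ) (s : SSign) : smod (some (c, s) : Smax Γ) = (c : WithBot Γ) := rfl

lemma smod_eq_bot_iff {x : Smax Γ} : smod x = ⊥ ↔ x = szero := by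
  cases x with
  | none => simp [smod, szero] <;> rfl
  | some p => obtain ⟨c, s⟩ := p; simp [smod, szero]

lemma sadd_szero_right (x : Smax Γ) : sadd x szero = x := by
  cases x with
  | none => rfl
  | some p => obtain ⟨c, s⟩ := p; rfl

lemma smod_sadd (a b : Smax Γ) : smod (sadd a b) = max (smod a) (smod b) := by
  cases a with
  | none => simp [sadd, smod]
  | some p =>
    obtain ⟨c, s⟩ := p
    cases b with
    | none => simp [sadd, smod]
    | some q =>
      obtain ⟨d, t⟩ := q
      by_cases h1 : c < d
      · simp [sadd, h1, smod, le_of_lt h1, max_eq_right]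
      · by_cases h2 : d < c
        · simp [sadd, h1, h2, smod, le_of_lt h2, max_eq_left]
        · have : c = d := le_antisymm (not_lt.mp h2) (not_lt.mp h1)
          subst this
          simp [sadd, smod]

lemma smod_smul (a b : Smax Γ) : smod (smul a b) = smod a + smod b := by
  cases a with
  | none => simp [smul, smod]
  | some p =>
    obtain ⟨c, s⟩ := p
    cases b with
    | none => simp [smul, smod]
    | some q => obtain ⟨d, t⟩ := q; simp [smul, smod]

lemma smul_sone_left (x : Smax Γ) : smul sone x = x := by
  cases x with
  | none => rfl
  | some p =>
    obtain ⟨c, s⟩ := p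
    show some (0 + c, sgnMul SSign.pos s) = some (c, s)
    simp [sgnMul]

lemma smul_sone_right (x : Smax Γ) : smul x sone = x := by
  cases x with
  | none => rfl
  | some p =>
    obtain ⟨c, s⟩ := p
    show some (c + 0, sgnMul s SSign.pos) = some (c, s)
    cases s <;> simp [sgnMul]

lemma smul_szero_right (x : Smax Γ) : smul x szero = szero := by
  cases x with
  | none => rfl
  | some p => obtain ⟨c, s⟩ := p; rfl

lemma ssub_szero (x : Smax Γ) : ssub x szero = x := by
  show sadd x (sneg szero) = x
  have : sneg (szero : Smax Γ) = szero := rfl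
  rw [this, sadd_szero_right]

lemma sbal_some (c : Γ) (s : SSign) : sbal (some (c, s) : Smax Γ) = some (c, SSign.bal) := by
  cases s <;> simp [sbal, ssub, sneg, sadd] <;> rfl

lemma sbal_szero : sbal (szero : Smax Γ) = szero := rfl

lemma smod_sbal (x : Smax Γ) : smod (sbal x) = smod x := by
  cases x with
  | none => rfl
  | some p => obtain ⟨c, s⟩ := p; rw [sbal_some]; rfl

end Basics

section Sums

set_option linter.unusedSectionVars false

variable {Γ : Type} [AddCommGroup Γ] [LinearOrder Γ] [IsOrderedAddMonoid Γ] {α : Type}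

lemma sadd_r_of_lt {x y : Smax Γ} (h : smod x < smod y) : sadd x y = y := by
  cases x with
  | none => cases y <;> rfl
  | some p =>
    obtain ⟨c, s⟩ := p
    cases y with
    | none => exact absurd h (by simp [smod])
    | some q =>
      obtain ⟨d, t⟩ := q
      have hcd : c < d := by simpa [smod] using h
      simp [sadd, hcd] <;> rfl

lemma sadd_l_of_gt {x y : Smax Γ} (h : smod y < smod x) : sadd x y = x := by
  cases x with
  | none => exact absurd h (by simp [smod])
  | some p =>
    obtain ⟨c, s⟩ := p
    cases y with
    | none => rfl
    | some q =>
      obtain ⟨d, t⟩ := q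
      have hdc : d < c := by simpa [smod] using h
      simp [sadd, hdc, asymm hdc] <;> rfl

lemma sadd_posM_l {M : Γ} {y : Smax Γ} (hy : smod y ≤ (M : WithBot Γ)) :
    sadd (some (M, SSign.pos)) y = some (M, SSign.pos) ∨
    sadd (some (M, SSign.pos)) y = some (M, SSign.bal) := by
  cases y with
  | none => left; rfl
  | some q =>
    obtain ⟨d, t⟩ := q
    have hd : d ≤ M := by simpa [smod] using hy
    rcases lt_or_eq_of_le hd with h | h
    · left; simp [sadd, h, asymm h] <;> rfl
    · subst h
      cases t
      · left; simp [sadd] <;> rfl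
      · right; simp [sadd] <;> rfl
      · right; simp [sadd] <;> rfl

lemma sadd_posM_r {M : Γ} {x : Smax Γ} (hx : smod x ≤ (M : WithBot Γ)) :
    sadd x (some (M, SSign.pos)) = some (M, SSign.pos) ∨
    sadd x (some (M, SSign.pos)) = some (M, SSign.bal) := by
  cases x with
  | none => left; rfl
  | some q =>
    obtain ⟨d, t⟩ := q
    have hd : d ≤ M := by simpa [smod] using hx
    rcases lt_or_eq_of_le hd with h | h
    · left; simp [sadd, h] <;> rfl
    · subst h
      cases t
      · left; simp [sadd] <;> rfl
      · right; simp [sadd] <;> rfl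
      · right; simp [sadd] <;> rfl

lemma sadd_balM_l {M : Γ} {y : Smax Γ} (hy : smod y ≤ (M : WithBot Γ)) :
    sadd (some (M, SSign.bal)) y = some (M, SSign.bal) := by
  cases y with
  | none => rfl
  | some q =>
    obtain ⟨d, t⟩ := q
    have hd : d ≤ M := by simpa [smod] using hy
    rcases lt_or_eq_of_le hd with h | h
    · simp [sadd, h, asymm h] <;> rfl
    · subst h; cases t <;> simp [sadd] <;> rfl

lemma sadd_balM_r {M : Γ} {x : Smax Γ} (hx : smod x ≤ (M : WithBot Γ)) :
    sadd x (some (M, SSign.bal)) = some (M, SSign.bal) := by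
  cases x with
  | none => rfl
  | some q =>
    obtain ⟨d, t⟩ := q
    have hd : d ≤ M := by simpa [smod] using hx
    rcases lt_or_eq_of_le hd with h | h
    · simp [sadd, h] <;> rfl
    · subst h; cases t <;> simp [sadd] <;> rfl

lemma isPos_sadd {x y : Smax Γ} (hx : IsPos x) (hy : IsPos y) : IsPos (sadd x y) := by
  cases x with
  | none => simpa [sadd] using hy
  | some p =>
    obtain ⟨c, s⟩ := p
    cases y with
    | none => simpa [sadd] using hx
    | some q =>
      obtain ⟨d, t⟩ := q
      have hs : s = SSign.pos := hx
      have ht : t = SSign.pos := hy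
      subst hs; subst ht
      by_cases h1 : c < d
      · simp [sadd, h1, IsPos]
      · by_cases h2 : d < c
        · simp [sadd, h1, h2, IsPos]
        · simp [sadd, h1, h2, IsPos]

lemma isPos_smul {x y : Smax Γ} (hx : IsPos x) (hy : IsPos y) : IsPos (smul x y) := by
  cases x with
  | none => trivial
  | some p =>
    obtain ⟨c, s⟩ := p
    cases y with
    | none => trivial
    | some q =>
      obtain ⟨d, t⟩ := q
      have hs : s = SSign.pos := hx
      have ht : t = SSign.pos := hy
      subst hs; subst ht
      show sgnMul SSign.pos SSign.pos = SSign.pos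
      rfl

lemma sumS_nil (f : α → Smax Γ) : sumS ([] : List α) f = szero := rfl

lemma sumS_cons (a : α) (l : List α) (f : α → Smax Γ) :
    sumS (a :: l) f = sadd (f a) (sumS l f) := rfl

lemma smod_sumS_le {l : List α} {f : α → Smax Γ} {m : WithBot Γ}
    (h : ∀ a ∈ l, smod (f a) ≤ m) : smod (sumS l f) ≤ m := by
  induction l with
  | nil => simp [sumS_nil, smod_szero]
  | cons a l ih =>
    rw [sumS_cons, smod_sadd]
    exact max_le (h a (by simp)) (ih fun b hb => h b (by simp [hb]))

lemma smod_sumS_lt {l : List α} {f : α → Smax Γ} {m : Γ}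
    (h : ∀ a ∈ l, smod (f a) < (m : WithBot Γ)) : smod (sumS l f) < (m : WithBot Γ) := by
  induction l with
  | nil => simpa [sumS_nil, smod_szero] using WithBot.bot_lt_coe m
  | cons a l ih =>
    rw [sumS_cons, smod_sadd]
    exact max_lt (h a (by simp)) (ih fun b hb => h b (by simp [hb]))

lemma isPos_sumS {l : List α} {f : α → Smax Γ}
    (h : ∀ a ∈ l, IsPos (f a)) : IsPos (sumS l f) := by
  induction l with
  | nil => trivial
  | cons a l ih =>
    rw [sumS_cons]
    exact isPos_sadd (h a (by simp)) (ih fun b hb => h b (by simp [hb]))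

lemma sumS_all_zero {l : List α} {f : α → Smax Γ}
    (h : ∀ a ∈ l, f a = szero) : sumS l f = szero := by
  induction l with
  | nil => rfl
  | cons a l ih =>
    rw [sumS_cons, h a (by simp), ih fun b hb => h b (by simp [hb])]
    rfl

/-- main structural lemma: all terms bounded by M, one term pos or bal at M. -/
lemma sumS_top {M : Γ} {l : List α} {f : α → Smax Γ}
    (hb : ∀ a ∈ l, smod (f a) ≤ (M : WithBot Γ)) {a₀ : α} (ha : a₀ ∈ l)
    (h0 : f a₀ = some (M, SSign.pos) ∨ f a₀ = some (M, SSign.bal)) :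
    sumS l f = some (M, SSign.pos) ∨ sumS l f = some (M, SSign.bal) := by
  induction l with
  | nil => cases ha
  | cons a l ih =>
    rw [sumS_cons]
    rcases List.mem_cons.mp ha with rfl | ha'
    · have hrest : smod (sumS l f) ≤ (M : WithBot Γ) :=
        smod_sumS_le fun b hb' => hb b (by simp [hb'])
      rcases h0 with h0 | h0
      · rw [h0]; exact sadd_posM_l hrest
      · rw [h0]; right; exact sadd_balM_l hrest
    · have hx : smod (f a) ≤ (M : WithBot Γ) := hb a (by simp)
      rcases ih (fun b hb' => hb b (by simp [hb'])) ha' with h | h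
      · rw [h]; exact sadd_posM_r hx
      · rw [h]; right; exact sadd_balM_r hx

/-- all terms positive with modulus ≤ M, one term = (M,pos): sum is (M,pos). -/
lemma sumS_pos_top {M : Γ} {l : List α} {f : α → Smax Γ}
    (hp : ∀ a ∈ l, IsPos (f a)) (hb : ∀ a ∈ l, smod (f a) ≤ (M : WithBot Γ))
    {a₀ : α} (ha : a₀ ∈ l) (h0 : f a₀ = some (M, SSign.pos)) :
    sumS l f = some (M, SSign.pos) := by
  have := sumS_top hb ha (Or.inl h0)
  rcases this with h | h
  · exact h
  · exfalso
    have hpos : IsPos (sumS l f) := isPos_sumS hp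
    rw [h] at hpos
    exact SSign.noConfusion hpos

/-- one term = (M,pos), all others strictly below: sum is (M,pos). -/
lemma sumS_strict_top {M : Γ} {l : List α} {f : α → Smax Γ} (hnd : l.Nodup)
    {a₀ : α} (ha : a₀ ∈ l) (h0 : f a₀ = some (M, SSign.pos))
    (hs : ∀ a ∈ l, a ≠ a₀ → smod (f a) < (M : WithBot Γ)) :
    sumS l f = some (M, SSign.pos) := by
  induction l with
  | nil => cases ha
  | cons a l ih =>
    rw [sumS_cons]
    rcases List.mem_cons.mp ha with rfl | ha'
    · have hnot : a₀ ∉ l := (List.nodup_cons.mp hnd).1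
      have hrest : smod (sumS l f) < (M : WithBot Γ) := by
        refine smod_sumS_lt fun b hb' => hs b (by simp [hb']) ?_
        rintro rfl; exact hnot hb'
      rw [h0]
      have : smod (sumS l f) < smod (some (M, SSign.pos) : Smax Γ) := by
        simpa [smod] using hrest
      exact sadd_l_of_gt this
    · have hne : a ≠ a₀ := by rintro rfl; exact (List.nodup_cons.mp hnd).1 ha'
      have hlt : smod (f a) < (M : WithBot Γ) := hs a (by simp) hne
      rw [ih (List.nodup_cons.mp hnd).2 ha'
          (fun b hb' hne' => hs b (by simp [hb']) hne')]
      exact sadd_r_of_lt (by simpa [smod] using hlt)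

end Sums

section Prods

set_option linter.unusedSectionVars false

variable {Γ : Type} [AddCommGroup Γ] [LinearOrder Γ] [IsOrderedAddMonoid Γ] {α : Type}

lemma sadd_comm (x y : Smax Γ) : sadd x y = sadd y x := by
  cases x with
  | none => cases y <;> rfl
  | some p =>
    obtain ⟨c, s⟩ := p
    cases y with
    | none => rfl
    | some q =>
      obtain ⟨d, t⟩ := q
      rcases lt_trichotomy c d with h | h | h
      · simp [sadd, h, asymm h] <;> rfl
      · subst h
        simp only [sadd, lt_irrefl, if_false]
        by_cases hst : s = t
        · subst hst; simp <;> rfl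
        · simp [hst, Ne.symm hst] <;> rfl
      · simp [sadd, h, asymm h] <;> rfl

lemma sumS_single {l : List α} {f : α → Smax Γ} {j : α} (hj : j ∈ l)
    (h : ∀ a ∈ l, a ≠ j → f a = szero) : sumS l f = f j := by
  induction l with
  | nil => cases hj
  | cons a l ih =>
    rw [sumS_cons]
    by_cases haj : a = j
    · subst haj
      by_cases hjl : a ∈ l
      · rw [ih hjl fun b hb hne => h b (by simp [hb]) hne]
        cases hfa : f a with
        | none => rfl
        | some p =>
          obtain ⟨c, s⟩ := p
          simp [sadd] <;> rfl
      · rw [sumS_all_zero fun b hb => h b (by simp [hb]) (by rintro rfl; exact hjl hb)]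
        exact sadd_szero_right _
    · rw [h a (by simp) haj]
      have hjl : j ∈ l := by rcases List.mem_cons.mp hj with h' | h'; exact absurd h'.symm haj; exact h'
      show sumS l f = f j
      exact ih hjl fun b hb hne => h b (by simp [hb]) hne

lemma sumS_pair {l : List α} {f : α → Smax Γ} {i j : α} (hnd : l.Nodup)
    (hi : i ∈ l) (hj : j ∈ l) (hij : i ≠ j)
    (h : ∀ a ∈ l, a ≠ i → a ≠ j → f a = szero) :
    sumS l f = sadd (f i) (f j) := by
  induction l with
  | nil => cases hi
  | cons a l ih =>
    obtain ⟨hal, hndl⟩ := List.nodup_cons.mp hnd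
    rw [sumS_cons]
    by_cases hai : a = i
    · subst hai
      have hjl : j ∈ l := by
        rcases List.mem_cons.mp hj with h' | h'; exact absurd h'.symm hij; exact h'
      congr 1
      exact sumS_single hjl fun b hb hbj =>
        h b (by simp [hb]) (by rintro rfl; exact hal hb) hbj
    · by_cases haj : a = j
      · subst haj
        have hil : i ∈ l := by
          rcases List.mem_cons.mp hi with h' | h'; exact absurd h' (Ne.symm hai); exact h'
        rw [sumS_single hil fun b hb hbi =>
          h b (by simp [hb]) hbi (by rintro rfl; exact hal hb)]
        exact sadd_comm _ _
      · rw [h a (by simp) hai haj]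
        have hil : i ∈ l := by
          rcases List.mem_cons.mp hi with h' | h'; exact absurd h' (Ne.symm hai); exact h'
        have hjl : j ∈ l := by
          rcases List.mem_cons.mp hj with h' | h'; exact absurd h' (Ne.symm haj); exact h'
        show sumS l f = _
        exact ih hndl hil hjl fun b hb => h b (by simp [hb])

lemma prodS_nil (f : α → Smax Γ) : prodS ([] : List α) f = sone := rfl

lemma prodS_cons (a : α) (l : List α) (f : α → Smax Γ) :
    prodS (a :: l) f = smul (f a) (prodS l f) := rfl

lemma smod_prodS (l : List α) (f : α → Smax Γ) :
    smod (prodS l f) = (l.map fun a => smod (f a)).sum := by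
  induction l with
  | nil => show smod (sone : Smax Γ) = 0; rfl
  | cons a l ih => rw [prodS_cons, smod_smul, ih, List.map_cons, List.sum_cons]

lemma isPos_prodS {l : List α} {f : α → Smax Γ}
    (h : ∀ a ∈ l, IsPos (f a)) : IsPos (prodS l f) := by
  induction l with
  | nil => show (SSign.pos = SSign.pos); rfl
  | cons a l ih =>
    rw [prodS_cons]
    exact isPos_smul (h a (by simp)) (ih fun b hb => h b (by simp [hb]))

lemma prodS_strict_pos {l : List α} {f : α → Smax Γ}
    (h : ∀ a ∈ l, ∃ c : Γ, f a = some (c, SSign.pos)) :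
    ∃ m : Γ, prodS l f = some (m, SSign.pos) := by
  induction l with
  | nil => exact ⟨0, rfl⟩
  | cons a l ih =>
    obtain ⟨c, hc⟩ := h a (by simp)
    obtain ⟨m, hm⟩ := ih fun b hb => h b (by simp [hb])
    exact ⟨c + m, by rw [prodS_cons, hc, hm]; rfl⟩

lemma prodS_map {β : Type} (l : List β) (g : β → α) (f : α → Smax Γ) :
    prodS (l.map g) f = prodS l (f ∘ g) := by
  unfold prodS
  rw [List.map_map]

/-- IsPos elements are szero or some (c, pos) -/
lemma isPos_cases {x : Smax Γ} (h : IsPos x) : x = szero ∨ ∃ c : Γ, x = some (c, SSign.pos) := by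
  cases x with
  | none => left; rfl
  | some p => obtain ⟨c, s⟩ := p; right; exact ⟨c, by rw [h]⟩

end Prods

section WB

set_option linter.unusedSectionVars false

variable {Γ : Type} [AddCommGroup Γ] [LinearOrder Γ] [IsOrderedAddMonoid Γ] {α : Type}

lemma wb_half_le {x y : WithBot Γ} (h : x + x ≤ y + y) : x ≤ y := by
  cases x with
  | bot => exact bot_le
  | coe a =>
    cases y with
    | bot =>
      exfalso
      rw [← WithBot.coe_add] at h
      simpa using h
    | coe b =>
      rw [← WithBot.coe_add, ← WithBot.coe_add, WithBot.coe_le_coe] at h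
      rw [WithBot.coe_le_coe]
      by_contra hab
      exact absurd (add_lt_add (not_le.mp hab) (not_le.mp hab)) (not_lt.mpr h)

lemma wb_half_lt {x y : WithBot Γ} (h : x + x < y + y) : x < y := by
  rcases lt_or_ge x y with h' | h'
  · exact h'
  · exact absurd (add_le_add h' h') (not_le.mpr h)

lemma wb_add_lt_add {x y z w : WithBot Γ} (hxy : x ≤ y) (hzw : z < w)
    (hy : y ≠ ⊥) (hw : w ≠ ⊥) : x + z < y + w := by
  lift y to Γ using hy
  lift w to Γ using hw
  cases x with
  | bot => rw [WithBot.bot_add, ← WithBot.coe_add]; exact WithBot.bot_lt_coe _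
  | coe a =>
    cases z with
    | bot => rw [WithBot.add_bot, ← WithBot.coe_add]; exact WithBot.bot_lt_coe _
    | coe c =>
      rw [← WithBot.coe_add, ← WithBot.coe_add, WithBot.coe_lt_coe]
      exact add_lt_add_of_le_of_lt (WithBot.coe_le_coe.mp hxy) (WithBot.coe_lt_coe.mp hzw)

lemma wb_add_lt_add' {x y z w : WithBot Γ} (hxy : x < y) (hzw : z ≤ w)
    (hy : y ≠ ⊥) (hw : w ≠ ⊥) : x + z < y + w := by
  lift y to Γ using hy
  lift w to Γ using hw
  cases x with
  | bot => rw [WithBot.bot_add, ← WithBot.coe_add]; exact WithBot.bot_lt_coe _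
  | coe a =>
    cases z with
    | bot => rw [WithBot.add_bot, ← WithBot.coe_add]; exact WithBot.bot_lt_coe _
    | coe c =>
      rw [← WithBot.coe_add, ← WithBot.coe_add, WithBot.coe_lt_coe]
      exact add_lt_add_of_lt_of_le (WithBot.coe_lt_coe.mp hxy) (WithBot.coe_le_coe.mp hzw)

lemma wb_sum_ne_bot {l : List α} {g : α → WithBot Γ} (h : ∀ a ∈ l, g a ≠ ⊥) :
    (l.map g).sum ≠ ⊥ := by
  induction l with
  | nil => simp
  | cons a l ih =>
    rw [List.map_cons, List.sum_cons]
    have h1 := h a (by simp)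
    have h2 := ih fun b hb => h b (by simp [hb])
    lift (g a) to Γ using h1 with ga
    lift ((l.map g).sum) to Γ using h2 with s
    rw [← WithBot.coe_add]
    exact WithBot.coe_ne_bot

lemma wb_sum_lt_sum {l : List α} {g h : α → WithBot Γ}
    (hle : ∀ a ∈ l, g a ≤ h a) (hnb : ∀ a ∈ l, h a ≠ ⊥)
    (hlt : ∃ a ∈ l, g a < h a) :
    (l.map g).sum < (l.map h).sum := by
  induction l with
  | nil => simp at hlt
  | cons a l ih =>
    simp only [List.map_cons, List.sum_cons]
    have hle' : ∀ c ∈ l, g c ≤ h c := fun c hc => hle c (List.mem_cons_of_mem _ hc)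
    have hnb' : ∀ c ∈ l, h c ≠ ⊥ := fun c hc => hnb c (List.mem_cons_of_mem _ hc)
    obtain ⟨b, hb, hblt⟩ := hlt
    rcases List.mem_cons.mp hb with rfl | hbl
    · exact wb_add_lt_add' hblt (List.sum_le_sum hle')
        (hnb b (List.mem_cons_self)) (wb_sum_ne_bot hnb')
    · exact wb_add_lt_add (hle a (List.mem_cons_self)) (ih hle' hnb' ⟨b, hbl, hblt⟩)
        (hnb a (List.mem_cons_self)) (wb_sum_ne_bot hnb')

lemma wb_sum_add_sum (l : List α) (g h : α → WithBot Γ) :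
    (l.map g).sum + (l.map h).sum = (l.map fun a => g a + h a).sum := by
  induction l with
  | nil => simp
  | cons a l ih =>
    simp only [List.map_cons, List.sum_cons]
    rw [← ih, add_add_add_comm]

end WB

section Quad

set_option linter.unusedSectionVars false

variable {Γ : Type} [AddCommGroup Γ] [LinearOrder Γ] [IsOrderedAddMonoid Γ]

lemma sle_szero_iff {x : Smax Γ} : sle szero x ↔ (IsPos x ∨ IsBal x) := by
  unfold sle
  rw [ssub_szero]

lemma slt_szero_iff {x : Smax Γ} : slt szero x ↔ (IsPos x ∧ x ≠ szero) := by
  unfold slt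
  rw [ssub_szero]

lemma sadd_idem (x : Smax Γ) : sadd x x = x := by
  cases x with
  | none => rfl
  | some p => obtain ⟨c, s⟩ := p; simp [sadd] <;> rfl

variable {n : ℕ} {A : Matrix (Fin n) (Fin n) (Smax Γ)}

lemma quad_single (i : Fin n) (u : Smax Γ) :
    quadFormS A (fun m => if m = i then u else szero) = smul u (smul (A i i) u) := by
  unfold quadFormS
  have h1 : ∀ p ∈ List.finRange n, p ≠ i →
      (fun p => sumS (List.finRange n) fun q =>
        smul (if p = i then u else szero) (smul (A p q) (if q = i then u else szero))) p
      = szero := by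
    intro p _ hp
    simp only [if_neg hp]
    exact sumS_all_zero fun q _ => rfl
  rw [sumS_single (List.mem_finRange i) h1]
  simp only [eq_self_iff_true, if_true]
  have h2 : ∀ q ∈ List.finRange n, q ≠ i →
      (fun q => smul u (smul (A i q) (if q = i then u else szero))) q = szero := by
    intro q _ hq
    simp only [if_neg hq]
    rw [smul_szero_right, smul_szero_right]
  rw [sumS_single (List.mem_finRange i) h2]
  simp only [eq_self_iff_true, if_true]

lemma quad_pair {i j : Fin n} (hij : i ≠ j) (u v : Smax Γ) :
    quadFormS A (fun m => if m = i then u else if m = j then v else szero) =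
    sadd (sadd (smul u (smul (A i i) u)) (smul u (smul (A i j) v)))
         (sadd (smul v (smul (A j i) u)) (smul v (smul (A j j) v))) := by
  unfold quadFormS
  set x : Fin n → Smax Γ := fun m => if m = i then u else if m = j then v else szero with hx
  have hxi : x i = u := by simp [hx]
  have hxj : x j = v := by simp [hx, if_neg (Ne.symm hij)]
  have hxo : ∀ m, m ≠ i → m ≠ j → x m = szero := by
    intro m h1 h2; simp [hx, if_neg h1, if_neg h2]
  have hinner : ∀ p : Fin n, (sumS (List.finRange n) fun q => smul (x p) (smul (A p q) (x q)))
      = sadd (smul (x p) (smul (A p i) u)) (smul (x p) (smul (A p j) v)) := by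
    intro p
    rw [sumS_pair (List.nodup_finRange n) (List.mem_finRange i) (List.mem_finRange j) hij
      (fun q _ hq1 hq2 => by rw [hxo q hq1 hq2, smul_szero_right, smul_szero_right]),
      hxi, hxj]
  have houter : ∀ p ∈ List.finRange n, p ≠ i → p ≠ j →
      (fun p => sumS (List.finRange n) fun q => smul (x p) (smul (A p q) (x q))) p = szero := by
    intro p _ h1 h2
    apply sumS_all_zero
    intro q _
    rw [hxo p h1 h2]
    rfl
  rw [sumS_pair (List.nodup_finRange n) (List.mem_finRange i) (List.mem_finRange j) hij houter]
  rw [hinner i, hinner j, hxi, hxj]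

lemma diag_isPos (h : TPSD A) (hsgn : MatSigned A) (i : Fin n) : IsPos (A i i) := by
  have hvs : VecSigned (fun m => if m = i then (sone : Smax Γ) else szero) := by
    intro m
    show IsSigned (if m = i then (sone : Smax Γ) else szero)
    by_cases hm : m = i
    · rw [if_pos hm]; exact fun hb => SSign.noConfusion hb
    · rw [if_neg hm]; trivial
  have hnz : (fun m => if m = i then (sone : Smax Γ) else szero) ≠ zeroVecS := by
    intro hc
    have : (if i = i then (sone : Smax Γ) else szero) = zeroVecS i := congrFun hc i
    rw [if_pos rfl] at this
    cases this
  have hq := h _ hvs hnz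
  rw [quad_single i sone, smul_sone_left, smul_sone_right] at hq
  rcases sle_szero_iff.mp hq with h' | h'
  · exact h'
  · cases hA : A i i with
    | none => trivial
    | some p =>
      obtain ⟨c, s⟩ := p
      rw [hA] at h'
      exact absurd h' (by have := hsgn i i; rw [hA] at this; exact this)

lemma diag_tpd (h : TPD A) (hsgn : MatSigned A) (i : Fin n) :
    ∃ c : Γ, A i i = some (c, SSign.pos) := by
  have hvs : VecSigned (fun m => if m = i then (sone : Smax Γ) else szero) := by
    intro m
    show IsSigned (if m = i then (sone : Smax Γ) else szero)
    by_cases hm : m = i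
    · rw [if_pos hm]; exact fun hb => SSign.noConfusion hb
    · rw [if_neg hm]; trivial
  have hnz : (fun m => if m = i then (sone : Smax Γ) else szero) ≠ zeroVecS := by
    intro hc
    have : (if i = i then (sone : Smax Γ) else szero) = zeroVecS i := congrFun hc i
    rw [if_pos rfl] at this
    cases this
  have hq := h _ hvs hnz
  rw [quad_single i sone, smul_sone_left, smul_sone_right, slt_szero_iff] at hq
  rcases isPos_cases hq.1 with h' | h'
  · exact absurd h' hq.2
  · exact h'

end Quad

section Had

set_option linter.unusedSectionVars false

variable {Γ : Type} [AddCommGroup Γ] [LinearOrder Γ] [IsOrderedAddMonoid Γ]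

lemma sadd_pos_negtop {m V : Γ} (h : m ≤ V) :
    sadd (some (m, SSign.pos)) (some (V, SSign.neg)) = some (V, SSign.neg) ∨
    sadd (some (m, SSign.pos)) (some (V, SSign.neg)) = some (V, SSign.bal) := by
  rcases lt_or_eq_of_le h with h | h
  · left; simp [sadd, h] <;> rfl
  · subst h; right; simp [sadd] <;> rfl

lemma sadd_negtop_pos {m V : Γ} (h : m ≤ V) :
    sadd (some (V, SSign.neg)) (some (m, SSign.pos)) = some (V, SSign.neg) ∨
    sadd (some (V, SSign.neg)) (some (m, SSign.pos)) = some (V, SSign.bal) := by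
  rcases lt_or_eq_of_le h with h | h
  · left; simp [sadd, h, asymm h] <;> rfl
  · subst h; right; simp [sadd] <;> rfl

variable {n : ℕ} {A : Matrix (Fin n) (Fin n) (Smax Γ)}

lemma had_tpsd [Nontrivial Γ] (hdiv : DivisibleGrp Γ) (h : TPSD A) (hsgn : MatSigned A)
    (hsym : SymmS A) (i j : Fin n) :
    smod (A i j) + smod (A i j) ≤ smod (A i i) + smod (A j j) := by
  by_cases hij : i = j
  · subst hij; exact le_refl _
  cases hAij : A i j with
  | none => rw [show smod (none : Smax Γ) = ⊥ from rfl, WithBot.bot_add]; exact bot_le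
  | some p =>
    obtain ⟨c, s⟩ := p
    have hsne : s ≠ SSign.bal := by have := hsgn i j; rw [hAij] at this; exact this
    obtain ⟨σ, hσb, hmul1, hmul2⟩ :
        ∃ σ, σ ≠ SSign.bal ∧ sgnMul s σ = SSign.neg ∧ sgnMul σ s = SSign.neg := by
      cases s with
      | pos => exact ⟨SSign.neg, fun hb => SSign.noConfusion hb, rfl, rfl⟩
      | neg => exact ⟨SSign.pos, fun hb => SSign.noConfusion hb, rfl, rfl⟩
      | bal => exact absurd rfl hsne
    have key : ∀ t w : Γ,
        ((t + (c + w) : Γ) : WithBot Γ) ≤ (t : WithBot Γ) + (smod (A i i) + (t : WithBot Γ)) ∨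
        ((w + (c + t) : Γ) : WithBot Γ) ≤ (w : WithBot Γ) + (smod (A j j) + (w : WithBot Γ)) := by
      intro t w
      by_contra hcon
      push_neg at hcon
      obtain ⟨h1, h2⟩ := hcon
      set x : Fin n → Smax Γ :=
        fun m => if m = i then (some (t, SSign.pos) : Smax Γ) else if m = j then some (w, σ) else szero
        with hxdef
      have hvs : VecSigned x := by
        intro m
        show IsSigned (if m = i then (some (t, SSign.pos) : Smax Γ) else if m = j then some (w, σ) else szero)
        by_cases hm1 : m = i
        · erw [if_pos hm1]; exact fun hb => SSign.noConfusion hb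
        · erw [if_neg hm1]
          by_cases hm2 : m = j
          · erw [if_pos hm2]; exact hσb
          · erw [if_neg hm2]; trivial
      have hnz : x ≠ zeroVecS := by
        intro hc
        have : (if (i : Fin n) = i then some (t, SSign.pos) else if i = j then some (w, σ) else szero)
            = zeroVecS i := congrFun hc i
        rw [if_pos rfl] at this
        cases this
      have hq := h x hvs hnz
      erw [hxdef, quad_pair hij, hsym j i, hAij] at hq
      have e2 : smul (some (t, SSign.pos)) (smul (some (c, s)) (some (w, σ)))
          = (some (t + (c + w), SSign.neg) : Smax Γ) := by
        show some (t + (c + w), sgnMul SSign.pos (sgnMul s σ)) = _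
        rw [hmul1]
        rfl
      have e3 : smul (some (w, σ)) (smul (some (c, s)) (some (t, SSign.pos)))
          = (some (w + (c + t), SSign.neg) : Smax Γ) := by
        show some (w + (c + t), sgnMul σ (sgnMul s SSign.pos)) = _
        have hs' : sgnMul s SSign.pos = s := by cases s <;> rfl
        rw [hs', hmul2]
      rw [e2, e3] at hq
      have hT1 : smod (smul (some (t, SSign.pos) : Smax Γ) (smul (A i i) (some (t, SSign.pos))))
          < smod (some (t + (c + w), SSign.neg) : Smax Γ) := by
        erw [smod_smul, smod_smul]; exact h1
      rw [sadd_r_of_lt hT1] at hq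
      have hT4 : smod (smul (some (w, σ) : Smax Γ) (smul (A j j) (some (w, σ))))
          < smod (some (w + (c + t), SSign.neg) : Smax Γ) := by
        erw [smod_smul, smod_smul]; exact h2
      rw [sadd_l_of_gt hT4] at hq
      have hVeq : w + (c + t) = t + (c + w) := by abel
      erw [hVeq, sadd_idem] at hq
      rcases sle_szero_iff.mp hq with hp | hp
      · exact SSign.noConfusion hp
      · exact SSign.noConfusion hp
    obtain ⟨g, hg⟩ := exists_ne (0 : Γ)
    obtain ⟨ε, hε⟩ : ∃ ε : Γ, 0 < ε := by
      rcases hg.lt_or_gt with h' | h'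
      · exact ⟨-g, neg_pos.mpr h'⟩
      · exact ⟨g, h'⟩
    cases hPi : smod (A i i) with
    | bot =>
      exfalso
      cases hPj : smod (A j j) with
      | bot =>
        rcases key 0 0 with hk | hk
        · rw [hPi] at hk; simp [WithBot.add_bot, WithBot.bot_add] at hk
        · rw [hPj] at hk; simp [WithBot.add_bot, WithBot.bot_add] at hk
      | coe β =>
        rcases key (β - c + ε) 0 with hk | hk
        · rw [hPi] at hk; simp [WithBot.add_bot, WithBot.bot_add] at hk
        · rw [hPj] at hk
          simp only [← WithBot.coe_add, WithBot.coe_le_coe] at hk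
          have hk' : β + ε ≤ β := by
            calc β + ε = 0 + (c + (β - c + ε)) := by abel
            _ ≤ 0 + (β + 0) := hk
            _ = β := by abel
          exact (lt_add_of_pos_right β hε).not_ge hk'
    | coe α =>
      cases hPj : smod (A j j) with
      | bot =>
        exfalso
        rcases key 0 (α - c + ε) with hk | hk
        · rw [hPi] at hk
          simp only [← WithBot.coe_add, WithBot.coe_le_coe] at hk
          have hk' : α + ε ≤ α := by
            calc α + ε = 0 + (c + (α - c + ε)) := by abel
            _ ≤ 0 + (α + 0) := hk
            _ = α := by abel
          exact (lt_add_of_pos_right α hε).not_ge hk'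
        · rw [hPj] at hk; simp [WithBot.add_bot, WithBot.bot_add] at hk
      | coe β =>
        obtain ⟨z, hz⟩ := hdiv 2 (by norm_num) (β - α)
        have hzz : z + z = β - α := by rw [← two_nsmul]; exact hz
        show ((c : WithBot Γ) + (c : WithBot Γ) ≤ (α : WithBot Γ) + (β : WithBot Γ))
        rw [← WithBot.coe_add, ← WithBot.coe_add, WithBot.coe_le_coe]
        rcases key z 0 with hk | hk
        · rw [hPi] at hk
          simp only [← WithBot.coe_add, WithBot.coe_le_coe] at hk
          rw [add_zero] at hk
          have hc' : c ≤ α + z := le_of_add_le_add_left hk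
          calc c + c ≤ (α + z) + (α + z) := add_le_add hc' hc'
          _ = (α + α) + (z + z) := by rw [add_add_add_comm]
          _ = (α + α) + (β - α) := by rw [hzz]
          _ = α + β := by abel
        · rw [hPj] at hk
          simp only [← WithBot.coe_add, WithBot.coe_le_coe] at hk
          rw [zero_add, zero_add, add_zero] at hk
          have h4 : (c + c) + (β - α) ≤ β + β := by
            calc (c + c) + (β - α) = (c + z) + (c + z) := by rw [← hzz]; abel
            _ ≤ β + β := add_le_add hk hk
          calc c + c ≤ (β + β) - (β - α) := le_sub_iff_add_le.mpr h4
          _ = α + β := by abel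

lemma had_tpd [Nontrivial Γ] (hdiv : DivisibleGrp Γ) (h : TPD A) (hsgn : MatSigned A)
    (hsym : SymmS A) {i j : Fin n} (hij : i ≠ j) :
    smod (A i j) + smod (A i j) < smod (A i i) + smod (A j j) := by
  obtain ⟨α, hAi⟩ := diag_tpd h hsgn i
  obtain ⟨β, hAj⟩ := diag_tpd h hsgn j
  have hPi : smod (A i i) = (α : WithBot Γ) := by rw [hAi]; rfl
  have hPj : smod (A j j) = (β : WithBot Γ) := by rw [hAj]; rfl
  rw [hPi, hPj]
  cases hAij : A i j with
  | none =>
    rw [show smod (none : Smax Γ) = ⊥ from rfl, WithBot.bot_add, ← WithBot.coe_add]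
    exact WithBot.bot_lt_coe _
  | some p =>
    obtain ⟨c, s⟩ := p
    have hsne : s ≠ SSign.bal := by have := hsgn i j; rw [hAij] at this; exact this
    obtain ⟨σ, hσb, hmul1, hmul2, hσσ⟩ :
        ∃ σ, σ ≠ SSign.bal ∧ sgnMul s σ = SSign.neg ∧ sgnMul σ s = SSign.neg ∧
          sgnMul σ σ = SSign.pos := by
      cases s with
      | pos => exact ⟨SSign.neg, fun hb => SSign.noConfusion hb, rfl, rfl, rfl⟩
      | neg => exact ⟨SSign.pos, fun hb => SSign.noConfusion hb, rfl, rfl, rfl⟩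
      | bal => exact absurd rfl hsne
    have key : ∀ t w : Γ,
        (t + (c + w)) < (t + (α + t)) ∨ (w + (c + t)) < (w + (β + w)) := by
      intro t w
      by_contra hcon
      push_neg at hcon
      obtain ⟨h1, h2⟩ := hcon
      set x : Fin n → Smax Γ :=
        fun m => if m = i then (some (t, SSign.pos) : Smax Γ) else if m = j then some (w, σ) else szero
        with hxdef
      have hvs : VecSigned x := by
        intro m
        show IsSigned (if m = i then (some (t, SSign.pos) : Smax Γ) else if m = j then some (w, σ) else szero)
        by_cases hm1 : m = i
        · erw [if_pos hm1]; exact fun hb => SSign.noConfusion hb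
        · erw [if_neg hm1]
          by_cases hm2 : m = j
          · erw [if_pos hm2]; exact hσb
          · erw [if_neg hm2]; trivial
      have hnz : x ≠ zeroVecS := by
        intro hc
        have : (if (i : Fin n) = i then some (t, SSign.pos) else if i = j then some (w, σ) else szero)
            = zeroVecS i := congrFun hc i
        rw [if_pos rfl] at this
        cases this
      have hq := h x hvs hnz
      erw [hxdef, quad_pair hij, hsym j i, hAij, hAi, hAj] at hq
      have e1 : smul (some (t, SSign.pos)) (smul (some (α, SSign.pos)) (some (t, SSign.pos)))
          = (some (t + (α + t), SSign.pos) : Smax Γ) := rfl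
      have e2 : smul (some (t, SSign.pos)) (smul (some (c, s)) (some (w, σ)))
          = (some (t + (c + w), SSign.neg) : Smax Γ) := by
        show some (t + (c + w), sgnMul SSign.pos (sgnMul s σ)) = _
        rw [hmul1]
        rfl
      have e3 : smul (some (w, σ)) (smul (some (c, s)) (some (t, SSign.pos)))
          = (some (w + (c + t), SSign.neg) : Smax Γ) := by
        show some (w + (c + t), sgnMul σ (sgnMul s SSign.pos)) = _
        have hs' : sgnMul s SSign.pos = s := by cases s <;> rfl
        rw [hs', hmul2]
      have e4 : smul (some (w, σ)) (smul (some (β, SSign.pos)) (some (w, σ)))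
          = (some (w + (β + w), SSign.pos) : Smax Γ) := by
        show some (w + (β + w), sgnMul σ (sgnMul SSign.pos σ)) = _
        have hs' : sgnMul SSign.pos σ = σ := rfl
        rw [hs', hσσ]
      rw [e1, e2, e3, e4] at hq
      have hVeq : w + (c + t) = t + (c + w) := by abel
      have h2' : w + (β + w) ≤ t + (c + w) := hVeq ▸ h2
      rw [hVeq] at hq
      rcases sadd_pos_negtop h1 with hX | hX <;>
        rcases sadd_negtop_pos h2' with hY | hY <;>
        rw [hX, hY] at hq <;>
        rcases slt_szero_iff.mp hq with ⟨hp, -⟩ <;>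
        simp [sadd, IsPos] at hp
    obtain ⟨z, hz⟩ := hdiv 2 (by norm_num) (β - α)
    have hzz : z + z = β - α := by rw [← two_nsmul]; exact hz
    show ((c : WithBot Γ) + (c : WithBot Γ) < (α : WithBot Γ) + (β : WithBot Γ))
    rw [← WithBot.coe_add, ← WithBot.coe_add, WithBot.coe_lt_coe]
    rcases key z 0 with hk | hk
    · rw [add_zero] at hk
      have hc' : c < α + z := lt_of_add_lt_add_left hk
      calc c + c < (α + z) + (α + z) := add_lt_add hc' hc'
      _ = (α + α) + (z + z) := by rw [add_add_add_comm]
      _ = (α + α) + (β - α) := by rw [hzz]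
      _ = α + β := by abel
    · rw [zero_add, zero_add, add_zero] at hk
      have h4 : (c + c) + (β - α) < β + β := by
        calc (c + c) + (β - α) = (c + z) + (c + z) := by rw [← hzz]; abel
        _ < β + β := add_lt_add hk hk
      calc c + c < (β + β) - (β - α) := lt_sub_iff_add_lt.mpr h4
      _ = α + β := by abel

end Had

section Det

set_option linter.unusedSectionVars false

variable {Γ : Type} [AddCommGroup Γ] [LinearOrder Γ] [IsOrderedAddMonoid Γ] {α : Type}

lemma sumS_congr {l : List α} {f g : α → Smax Γ} (h : ∀ a ∈ l, f a = g a) :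
    sumS l f = sumS l g := by
  induction l with
  | nil => rfl
  | cons a l ih =>
    rw [sumS_cons, sumS_cons, h a (by simp), ih fun b hb => h b (by simp [hb])]

lemma prodS_congr {l : List α} {f g : α → Smax Γ} (h : ∀ a ∈ l, f a = g a) :
    prodS l f = prodS l g := by
  induction l with
  | nil => rfl
  | cons a l ih =>
    rw [prodS_cons, prodS_cons, h a (by simp), ih fun b hb => h b (by simp [hb])]

lemma wb_add_ne_bot {x y : WithBot Γ} (hx : x ≠ ⊥) (hy : y ≠ ⊥) : x + y ≠ ⊥ := by
  lift x to Γ using hx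
  lift y to Γ using hy
  rw [← WithBot.coe_add]
  exact WithBot.coe_ne_bot

variable {k n : ℕ}

lemma perm_map_finRange (π : Equiv.Perm (Fin k)) :
    ((List.finRange k).map π).Perm (List.finRange k) := by
  apply List.perm_of_nodup_nodup_toFinset_eq
  · exact (List.nodup_finRange k).map π.injective
  · exact List.nodup_finRange k
  · ext a
    simp only [List.mem_toFinset, List.mem_map, List.mem_finRange, true_and, iff_true]
    exact ⟨π.symm a, Equiv.apply_symm_apply π a⟩

lemma wsum_reindex (g : Fin k → WithBot Γ) (π : Equiv.Perm (Fin k)) :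
    ((List.finRange k).map fun a => g (π a)).sum = ((List.finRange k).map g).sum := by
  have h1 : (List.finRange k).map (fun a => g (π a)) = (((List.finRange k).map π).map g) := by
    rw [List.map_map]; rfl
  rw [h1]
  exact List.Perm.sum_eq ((perm_map_finRange π).map g)

lemma key_perm_le (A : Matrix (Fin n) (Fin n) (Smax Γ))
    (hHad : ∀ i j, smod (A i j) + smod (A i j) ≤ smod (A i i) + smod (A j j))
    (e : Fin k → Fin n) (π : Equiv.Perm (Fin k)) :
    ((List.finRange k).map fun a => smod (A (e a) (e (π a)))).sum ≤
    ((List.finRange k).map fun a => smod (A (e a) (e a))).sum := by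
  apply wb_half_le
  calc ((List.finRange k).map fun a => smod (A (e a) (e (π a)))).sum +
      ((List.finRange k).map fun a => smod (A (e a) (e (π a)))).sum
      = ((List.finRange k).map fun a =>
          smod (A (e a) (e (π a))) + smod (A (e a) (e (π a)))).sum :=
        wb_sum_add_sum _ _ _
    _ ≤ ((List.finRange k).map fun a =>
          smod (A (e a) (e a)) + smod (A (e (π a)) (e (π a)))).sum :=
        List.sum_le_sum fun a _ => hHad (e a) (e (π a))
    _ = ((List.finRange k).map fun a => smod (A (e a) (e a))).sum +
        ((List.finRange k).map fun a => smod (A (e (π a)) (e (π a)))).sum :=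
        (wb_sum_add_sum _ _ _).symm
    _ = _ := by rw [wsum_reindex (fun a => smod (A (e a) (e a))) π]

lemma key_perm_lt (A : Matrix (Fin n) (Fin n) (Smax Γ))
    (hHads : ∀ i j, i ≠ j → smod (A i j) + smod (A i j) < smod (A i i) + smod (A j j))
    (hdnb : ∀ i, smod (A i i) ≠ ⊥)
    {e : Fin k → Fin n} (he : Function.Injective e)
    {π : Equiv.Perm (Fin k)} (hπ : π ≠ 1) :
    ((List.finRange k).map fun a => smod (A (e a) (e (π a)))).sum <
    ((List.finRange k).map fun a => smod (A (e a) (e a))).sum := by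
  apply wb_half_lt
  have hw : ∃ a₀ : Fin k, π a₀ ≠ a₀ := by
    by_contra hc
    push_neg at hc
    exact hπ (Equiv.ext fun a => hc a)
  obtain ⟨a₀, ha₀⟩ := hw
  have step : ((List.finRange k).map fun a =>
      smod (A (e a) (e (π a))) + smod (A (e a) (e (π a)))).sum <
      ((List.finRange k).map fun a =>
      smod (A (e a) (e a)) + smod (A (e (π a)) (e (π a)))).sum := by
    apply wb_sum_lt_sum
    · intro a _
      by_cases hpa : π a = a
      · rw [hpa]
      · exact le_of_lt (hHads (e a) (e (π a)) fun hc => hpa (he hc).symm)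
    · intro a _
      exact wb_add_ne_bot (hdnb (e a)) (hdnb (e (π a)))
    · exact ⟨a₀, List.mem_finRange a₀,
        hHads (e a₀) (e (π a₀)) (fun hc => ha₀ (he hc).symm)⟩
  calc ((List.finRange k).map fun a => smod (A (e a) (e (π a)))).sum +
      ((List.finRange k).map fun a => smod (A (e a) (e (π a)))).sum
      = ((List.finRange k).map fun a =>
          smod (A (e a) (e (π a))) + smod (A (e a) (e (π a)))).sum := wb_sum_add_sum _ _ _
    _ < ((List.finRange k).map fun a =>
          smod (A (e a) (e a)) + smod (A (e (π a)) (e (π a)))).sum := step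
    _ = ((List.finRange k).map fun a => smod (A (e a) (e a))).sum +
        ((List.finRange k).map fun a => smod (A (e (π a)) (e (π a)))).sum :=
        (wb_sum_add_sum _ _ _).symm
    _ = _ := by rw [wsum_reindex (fun a => smod (A (e a) (e a))) π]

lemma permSignS_smod (π : Equiv.Perm (Fin k)) : smod (permSignS π : Smax Γ) = (0 : WithBot Γ) := by
  unfold permSignS
  split_ifs <;> rfl

lemma permSignS_one : (permSignS (1 : Equiv.Perm (Fin k)) : Smax Γ) = sone := by
  unfold permSignS
  rw [if_pos]
  simp [Equiv.Perm.sign_one]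

lemma detS_term_eq (A : Matrix (Fin n) (Fin n) (Smax Γ)) (e : Fin k → Fin n) :
    detS (Matrix.of fun a b : Fin k => A (e a) (e b)) =
    sumS (Finset.univ : Finset (Equiv.Perm (Fin k))).toList
      (fun π => smul (permSignS π) (prodS (List.finRange k) fun a => A (e a) (e (π a)))) := by
  unfold detS
  apply sumS_congr
  intro π _
  congr 1

lemma F_one (A : Matrix (Fin n) (Fin n) (Smax Γ)) (e : Fin k → Fin n) :
    smul (permSignS (1 : Equiv.Perm (Fin k)))
      (prodS (List.finRange k) fun a => A (e a) (e ((1 : Equiv.Perm (Fin k)) a))) =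
    prodS (List.finRange k) fun a => A (e a) (e a) := by
  rw [permSignS_one, smul_sone_left]
  exact prodS_congr fun a _ => by rw [Equiv.Perm.one_apply]

lemma smod_F_le (A : Matrix (Fin n) (Fin n) (Smax Γ))
    (hHad : ∀ i j, smod (A i j) + smod (A i j) ≤ smod (A i i) + smod (A j j))
    (e : Fin k → Fin n) (π : Equiv.Perm (Fin k)) :
    smod (smul (permSignS π) (prodS (List.finRange k) fun a => A (e a) (e (π a)))) ≤
    smod (prodS (List.finRange k) fun a => A (e a) (e a)) := by
  rw [smod_smul, permSignS_smod, zero_add, smod_prodS, smod_prodS]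
  exact key_perm_le A hHad e π

/-- structure of the determinant of a (principal-type) submatrix, TPSD case -/
lemma detS_sub (A : Matrix (Fin n) (Fin n) (Smax Γ))
    (hHad : ∀ i j, smod (A i j) + smod (A i j) ≤ smod (A i i) + smod (A j j))
    (hdp : ∀ i, IsPos (A i i)) (e : Fin k → Fin n) :
    detS (Matrix.of fun a b : Fin k => A (e a) (e b)) =
      prodS (List.finRange k) (fun a => A (e a) (e a)) ∨
    detS (Matrix.of fun a b : Fin k => A (e a) (e b)) =
      sbal (prodS (List.finRange k) (fun a => A (e a) (e a))) := by
  rw [detS_term_eq]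
  have hDpos : IsPos (prodS (List.finRange k) (fun a => A (e a) (e a))) :=
    isPos_prodS fun a _ => hdp (e a)
  rcases isPos_cases hDpos with hD | ⟨M, hD⟩
  · left
    rw [hD, sumS_all_zero]
    intro π _
    apply smod_eq_bot_iff.mp
    have := smod_F_le A hHad e π
    rw [hD] at this
    exact le_bot_iff.mp this
  · have h1 := sumS_top (M := M)
      (f := fun π => smul (permSignS π) (prodS (List.finRange k) fun a => A (e a) (e (π a))))
      (fun π _ => by rw [← smod_some M SSign.pos, ← hD]; exact smod_F_le A hHad e π)
      ((Finset.mem_toList).mpr (Finset.mem_univ (1 : Equiv.Perm (Fin k))))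
      (Or.inl ((F_one A e).trans hD))
    rcases h1 with h1 | h1
    · left; rw [h1, hD]
    · right; rw [h1, hD, sbal_some]

/-- structure of the determinant of a (principal-type) submatrix, TPD case -/
lemma detS_sub_tpd (A : Matrix (Fin n) (Fin n) (Smax Γ))
    (hHad : ∀ i j, smod (A i j) + smod (A i j) ≤ smod (A i i) + smod (A j j))
    (hHads : ∀ i j, i ≠ j → smod (A i j) + smod (A i j) < smod (A i i) + smod (A j j))
    (hdnb : ∀ i, ∃ c : Γ, A i i = some (c, SSign.pos))
    {e : Fin k → Fin n} (he : Function.Injective e) :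
    detS (Matrix.of fun a b : Fin k => A (e a) (e b)) =
      prodS (List.finRange k) (fun a => A (e a) (e a)) := by
  rw [detS_term_eq]
  obtain ⟨M, hD⟩ := prodS_strict_pos (l := List.finRange k)
    (f := fun a => A (e a) (e a)) (fun a _ => hdnb (e a))
  rw [hD]
  apply sumS_strict_top (Finset.nodup_toList _)
    ((Finset.mem_toList).mpr (Finset.mem_univ (1 : Equiv.Perm (Fin k))))
    ((F_one A e).trans hD)
  intro π _ hπ
  have hlt : smod (prodS (List.finRange k) fun a => A (e a) (e (π a))) <
      smod (prodS (List.finRange k) fun a => A (e a) (e a)) := by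
    rw [smod_prodS, smod_prodS]
    exact key_perm_lt A hHads (fun i => by obtain ⟨c, hc⟩ := hdnb i; rw [hc]; exact WithBot.coe_ne_bot) he hπ
  rw [smod_smul, permSignS_smod, zero_add]
  rw [hD] at hlt
  exact hlt

end Det

section Trk

set_option linter.unusedSectionVars false

variable {Γ : Type} [AddCommGroup Γ] [LinearOrder Γ] [IsOrderedAddMonoid Γ]

lemma natLe_smod_le {a b : Smax Γ} (h : natLe a b) : smod a ≤ smod b := by
  have h' : smod (sadd a b) = smod b := congrArg smod h
  rw [smod_sadd] at h'
  exact h' ▸ le_max_left _ _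

lemma strictMono_val_le {k n : ℕ} {f : Fin k → Fin n} (hf : StrictMono f) (a : Fin k) :
    (a : ℕ) ≤ (f a : ℕ) := by
  have key : ∀ m : ℕ, ∀ h : m < k, m ≤ (f ⟨m, h⟩ : ℕ) := by
    intro m
    induction m with
    | zero => intro h; exact Nat.zero_le _
    | succ m ih =>
      intro h
      have h' : m < k := Nat.lt_of_succ_lt h
      have h1 : f ⟨m, h'⟩ < f ⟨m + 1, h⟩ := hf (by rw [Fin.lt_def]; exact Nat.lt_succ_self m)
      have h2 : (f ⟨m, h'⟩ : ℕ) < (f ⟨m + 1, h⟩ : ℕ) := Fin.lt_def.mp h1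
      have h3 := ih h'
      omega
  have := key a.1 a.2
  simpa using this

lemma finRange_take {k n : ℕ} (hkn : k ≤ n) :
    (List.finRange n).take k = (List.finRange k).map (Fin.castLE hkn) := by
  apply List.ext_getElem
  · simp [List.length_take, List.length_finRange, Nat.min_eq_left hkn]
  · intro i h1 h2
    rw [List.getElem_take, List.getElem_map, List.getElem_finRange, List.getElem_finRange]
    apply Fin.ext
    simp [Fin.coe_castLE]

/-- the set {0, …, k−1} inside Fin n -/
def K0 (k n : ℕ) (hkn : k ≤ n) : Finset (Fin n) :=
  Finset.map ⟨Fin.castLE hkn, Fin.castLE_injective hkn⟩ Finset.univ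

lemma K0_card {k n : ℕ} (hkn : k ≤ n) : (K0 k n hkn).card = k := by
  rw [K0, Finset.card_map, Finset.card_fin]

lemma K0_mem {k n : ℕ} (hkn : k ≤ n) :
    K0 k n hkn ∈ (Finset.univ : Finset (Fin n)).powersetCard k :=
  Finset.mem_powersetCard.mpr ⟨Finset.subset_univ _, K0_card hkn⟩

lemma K0_orderEmb {k n : ℕ} (hkn : k ≤ n) (h : (K0 k n hkn).card = k) (a : Fin k) :
    (K0 k n hkn).orderEmbOfFin h a = Fin.castLE hkn a := by
  have huniq := Finset.orderEmbOfFin_unique' h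
    (f := OrderEmbedding.ofStrictMono (Fin.castLE hkn) (Fin.strictMono_castLE hkn))
    (fun x => Finset.mem_map.mpr ⟨x, Finset.mem_univ x, rfl⟩)
  rw [← huniq]
  rfl

end Trk

section Main

set_option linter.unusedSectionVars false

variable {Γ : Type} [AddCommGroup Γ] [LinearOrder Γ] [IsOrderedAddMonoid Γ]

lemma smod_DK_le {n k : ℕ} (A : Matrix (Fin n) (Fin n) (Smax Γ)) (hsort : DiagSortedS A)
    (hkn : k ≤ n) (K : Finset (Fin n)) (h : K.card = k) :
    smod (prodS (List.finRange k) fun a => A (K.orderEmbOfFin h a) (K.orderEmbOfFin h a)) ≤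
    smod (prodS ((List.finRange n).take k) fun i => A i i) := by
  rw [finRange_take hkn, prodS_map, smod_prodS, smod_prodS]
  apply List.sum_le_sum
  intro a _
  apply natLe_smod_le
  apply hsort
  rw [Fin.le_def]
  have h1 : (Fin.castLE hkn a : ℕ) = (a : ℕ) := Fin.coe_castLE hkn a
  rw [h1]
  exact strictMono_val_le (K.orderEmbOfFin h).strictMono a

lemma DK0_eq {n k : ℕ} (A : Matrix (Fin n) (Fin n) (Smax Γ)) (hkn : k ≤ n)
    (h : (K0 k n hkn).card = k) :
    prodS (List.finRange k)
      (fun a => A ((K0 k n hkn).orderEmbOfFin h a) ((K0 k n hkn).orderEmbOfFin h a)) =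
    prodS ((List.finRange n).take k) (fun i => A i i) := by
  rw [finRange_take hkn, prodS_map]
  exact prodS_congr fun a _ => by rw [K0_orderEmb hkn h a]; rfl

end Main

set_option maxHeartbeats 1000000

/-- for a TPSD matrix with non-increasing diagonal d₁ ⪰ ⋯ ⪰ dₙ,
tr_k(A) is d₁⊙⋯⊙d_k or its balance, and 𝟘 ≤ tr_k(A); for a TPD matrix,
tr_k(A) = d₁⊙⋯⊙d_k and 𝟘 < tr_k(A). -/
theorem trace_of_tpsd {Γ : Type} [AddCommGroup Γ] [LinearOrder Γ] [IsOrderedAddMonoid Γ] [Nontrivial Γ]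
    (hdiv : DivisibleGrp Γ) {n : ℕ}
    (A : Matrix (Fin n) (Fin n) (Smax Γ)) (hsym : SymmS A) (hsgn : MatSigned A)
    (hsort : DiagSortedS A) :
    (TPSD A → ∀ k : ℕ, 1 ≤ k → k ≤ n →
      ((trkS k A = prodS ((List.finRange n).take k) (fun i => A i i) ∨
        trkS k A = sbal (prodS ((List.finRange n).take k) (fun i => A i i))) ∧
        sle szero (trkS k A))) ∧
    (TPD A → ∀ k : ℕ, 1 ≤ k → k ≤ n →
      (trkS k A = prodS ((List.finRange n).take k) (fun i => A i i) ∧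
        slt szero (trkS k A))) := by
  constructor
  · -- TPSD part
    intro htpsd k _hk1 hkn
    have hdp : ∀ i, IsPos (A i i) := diag_isPos htpsd hsgn
    have hHad : ∀ i j, smod (A i j) + smod (A i j) ≤ smod (A i i) + smod (A j j) :=
      had_tpsd hdiv htpsd hsgn hsym
    have hterm : ∀ K : {x // x ∈ (Finset.univ : Finset (Fin n)).powersetCard k},
        detS (Matrix.of fun a b : Fin k =>
          A (K.1.orderEmbOfFin (Finset.mem_powersetCard.mp K.2).2 a)
            (K.1.orderEmbOfFin (Finset.mem_powersetCard.mp K.2).2 b)) =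
          prodS (List.finRange k)
            (fun a => A (K.1.orderEmbOfFin (Finset.mem_powersetCard.mp K.2).2 a)
              (K.1.orderEmbOfFin (Finset.mem_powersetCard.mp K.2).2 a)) ∨
        detS (Matrix.of fun a b : Fin k =>
          A (K.1.orderEmbOfFin (Finset.mem_powersetCard.mp K.2).2 a)
            (K.1.orderEmbOfFin (Finset.mem_powersetCard.mp K.2).2 b)) =
          sbal (prodS (List.finRange k)
            (fun a => A (K.1.orderEmbOfFin (Finset.mem_powersetCard.mp K.2).2 a)
              (K.1.orderEmbOfFin (Finset.mem_powersetCard.mp K.2).2 a))) :=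
      fun K => detS_sub A hHad hdp _
    have hmodK : ∀ K : {x // x ∈ (Finset.univ : Finset (Fin n)).powersetCard k},
        smod (prodS (List.finRange k)
          (fun a => A (K.1.orderEmbOfFin (Finset.mem_powersetCard.mp K.2).2 a)
            (K.1.orderEmbOfFin (Finset.mem_powersetCard.mp K.2).2 a))) ≤
        smod (prodS ((List.finRange n).take k) fun i => A i i) :=
      fun K => smod_DK_le A hsort hkn K.1 (Finset.mem_powersetCard.mp K.2).2
    rcases isPos_cases (show IsPos (prodS ((List.finRange n).take k) (fun i : Fin n => A i i))
        from isPos_prodS fun a _ => hdp a) with hP0 | ⟨M, hPM⟩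
    · have hz : trkS k A = szero := by
        unfold trkS
        apply sumS_all_zero
        intro K _
        have hD0 : prodS (List.finRange k)
            (fun a => A (K.1.orderEmbOfFin (Finset.mem_powersetCard.mp K.2).2 a)
              (K.1.orderEmbOfFin (Finset.mem_powersetCard.mp K.2).2 a)) = szero := by
          apply smod_eq_bot_iff.mp
          apply le_bot_iff.mp
          have := hmodK K
          rwa [hP0, smod_szero] at this
        rcases hterm K with hK | hK
        · rw [hK, hD0]
        · rw [hK, hD0, sbal_szero]
      constructor
      · left; rw [hz, hP0]
      · rw [hz]; exact sle_szero_iff.mpr (Or.inl trivial)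
    · have htop : trkS k A = some (M, SSign.pos) ∨ trkS k A = some (M, SSign.bal) := by
        unfold trkS
        apply sumS_top (M := M)
        · intro K _
          have hb : smod (prodS (List.finRange k)
              (fun a => A (K.1.orderEmbOfFin (Finset.mem_powersetCard.mp K.2).2 a)
                (K.1.orderEmbOfFin (Finset.mem_powersetCard.mp K.2).2 a))) ≤ (M : WithBot Γ) := by
            have := hmodK K
            rwa [hPM, smod_some] at this
          rcases hterm K with hK | hK
          · rw [hK]; exact hb
          · rw [hK, smod_sbal]; exact hb
        · exact Finset.mem_toList.mpr (Finset.mem_attach _ ⟨K0 k n hkn, K0_mem hkn⟩)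
        · have hDK0 : prodS (List.finRange k)
              (fun a => A ((K0 k n hkn).orderEmbOfFin
                  (Finset.mem_powersetCard.mp (K0_mem hkn)).2 a)
                ((K0 k n hkn).orderEmbOfFin (Finset.mem_powersetCard.mp (K0_mem hkn)).2 a))
              = some (M, SSign.pos) := by
            rw [DK0_eq A hkn]; exact hPM
          rcases hterm ⟨K0 k n hkn, K0_mem hkn⟩ with hK | hK
          · left; rw [hK]; exact hDK0
          · right; rw [hK, hDK0, sbal_some]
      rcases htop with h' | h'
      · constructor
        · left; rw [h', hPM]
        · rw [h']; exact sle_szero_iff.mpr (Or.inl rfl)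
      · constructor
        · right; rw [h', hPM, sbal_some]
        · rw [h']; exact sle_szero_iff.mpr (Or.inr rfl)
  · -- TPD part
    intro htpd k _hk1 hkn
    have hdnb : ∀ i, ∃ c : Γ, A i i = some (c, SSign.pos) := diag_tpd htpd hsgn
    have hdp : ∀ i, IsPos (A i i) := fun i => by
      obtain ⟨c, hc⟩ := hdnb i; rw [hc]; exact rfl
    have hHads : ∀ i j, i ≠ j →
        smod (A i j) + smod (A i j) < smod (A i i) + smod (A j j) :=
      fun i j hij => had_tpd hdiv htpd hsgn hsym hij
    have hHad : ∀ i j, smod (A i j) + smod (A i j) ≤ smod (A i i) + smod (A j j) := by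
      intro i j
      by_cases hij : i = j
      · subst hij; exact le_refl _
      · exact le_of_lt (hHads i j hij)
    have hterm : ∀ K : {x // x ∈ (Finset.univ : Finset (Fin n)).powersetCard k},
        detS (Matrix.of fun a b : Fin k =>
          A (K.1.orderEmbOfFin (Finset.mem_powersetCard.mp K.2).2 a)
            (K.1.orderEmbOfFin (Finset.mem_powersetCard.mp K.2).2 b)) =
          prodS (List.finRange k)
            (fun a => A (K.1.orderEmbOfFin (Finset.mem_powersetCard.mp K.2).2 a)
              (K.1.orderEmbOfFin (Finset.mem_powersetCard.mp K.2).2 a)) :=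
      fun K => detS_sub_tpd A hHad hHads hdnb
        (K.1.orderEmbOfFin (Finset.mem_powersetCard.mp K.2).2).injective
    have hmodK : ∀ K : {x // x ∈ (Finset.univ : Finset (Fin n)).powersetCard k},
        smod (prodS (List.finRange k)
          (fun a => A (K.1.orderEmbOfFin (Finset.mem_powersetCard.mp K.2).2 a)
            (K.1.orderEmbOfFin (Finset.mem_powersetCard.mp K.2).2 a))) ≤
        smod (prodS ((List.finRange n).take k) fun i => A i i) :=
      fun K => smod_DK_le A hsort hkn K.1 (Finset.mem_powersetCard.mp K.2).2
    obtain ⟨M, hPM⟩ := prodS_strict_pos (l := (List.finRange n).take k)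
      (f := fun i : Fin n => A i i) (fun a _ => hdnb a)
    have heq : trkS k A = some (M, SSign.pos) := by
      unfold trkS
      apply sumS_pos_top (M := M)
      · intro K _
        rw [hterm K]
        exact isPos_prodS fun a _ => hdp _
      · intro K _
        rw [hterm K]
        have := hmodK K
        rwa [hPM, smod_some] at this
      · exact Finset.mem_toList.mpr (Finset.mem_attach _ ⟨K0 k n hkn, K0_mem hkn⟩)
      · rw [hterm ⟨K0 k n hkn, K0_mem hkn⟩, DK0_eq A hkn]
        exact hPM
    constructor
    · rw [heq, hPM]
    · rw [heq]
      exact slt_szero_iff.mpr ⟨rfl, fun hc => by cases hc⟩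

end TropPaper
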